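/- arXiv:1202.6085 — 2 statements merged into one kernel-verified Lean document; each statement's English description precedes it below -/
import Mathlib

section
/- Let G be a connected d-regular simple graph and r ≥ 6 with r ≢ 0 (mod 3) and diam(G) ≥ r. Then e(G^r)/e(G) ≥ ⌈r/3⌉. -/
/-- The `r`-th power of a graph: two distinct vertices are adjacent whenever they are
within distance `r` of each other. -/
def SimpleGraph.power {V : Type*} (G : SimpleGraph V) (r : ℕ) : SimpleGraph V where
  Adj u v := u ≠ v ∧ G.dist u v ≤ r
  symm := ⟨fun u v h => ⟨h.1.symm, by rw [SimpleGraph.dist_comm]; exact h.2⟩⟩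
  loopless := ⟨fun v h => h.1 rfl⟩

namespace SimpleGraph

variable {V : Type*} {G : SimpleGraph V}

lemma dist_getVert_le' (hG : G.Connected) {u w : V} (p : G.Walk u w) (i : ℕ) :
    G.dist u (p.getVert i) ≤ i := by
  induction p generalizing i with
  | nil => rw [Walk.getVert_of_length_le _ (by simp)]; simp [SimpleGraph.dist_self]
  | @cons a b c h q ih =>
    cases i with
    | zero => simp
    | succ i =>
      rw [Walk.getVert_cons_succ]
      calc G.dist a (q.getVert i) ≤ G.dist a b + G.dist b (q.getVert i) := hG.dist_triangle
        _ ≤ 1 + i := by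
            gcongr
            · exact le_of_eq (dist_eq_one_iff_adj.mpr h)
            · exact ih i
        _ = i + 1 := by omega

lemma exists_dist_eq' (hG : G.Connected) {u w : V} {i : ℕ} (h : i ≤ G.dist u w) :
    ∃ x : V, G.dist u x = i := by
  obtain ⟨p, hp⟩ := (hG.exists_walk_length_eq_dist u w)
  refine ⟨p.getVert i, le_antisymm (dist_getVert_le' hG p i) ?_⟩
  have hi : i ≤ p.length := by omega
  have h1 : G.dist w (p.getVert i) ≤ p.length - i := by
    have := dist_getVert_le' hG p.reverse (p.length - i)
    rwa [Walk.getVert_reverse, Nat.sub_sub_self hi] at this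
  have h2 : G.dist u w ≤ G.dist u (p.getVert i) + G.dist (p.getVert i) w := hG.dist_triangle
  rw [dist_comm] at h1
  omega

lemma deg_bound {V : Type*} [Fintype V] [DecidableEq V] {G : SimpleGraph V}
    [DecidableRel G.Adj] {r : ℕ} [DecidableRel (G.power r).Adj]
    (hG : G.Connected) {d : ℕ} (hreg : G.IsRegularOfDegree d) {m : ℕ}
    (hmr : 3*m+1 ≤ r) {v z : V} (hz : 3*m+1 ≤ G.dist v z) :
    (m+1)*d + m ≤ (G.power r).degree v := by
  have : Nonempty V := ⟨v⟩
  have hxj : ∀ j, j ≤ m → ∃ x, G.dist v x = 3*j := by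
    intro j hj
    exact exists_dist_eq' hG (le_trans (by omega) hz)
  choose! x hx using hxj
  set T : ℕ → Finset V := fun j => insert (x j) (G.neighborFinset (x j)) with hT
  have hTdist : ∀ j, j ≤ m → ∀ y ∈ T j, 3*j ≤ G.dist v y + 1 ∧ G.dist v y ≤ 3*j + 1 := by
    intro j hj y hy
    rw [hT] at hy
    simp only [Finset.mem_insert, SimpleGraph.mem_neighborFinset] at hy
    rcases hy with rfl | hadj
    · rw [hx j hj]; omega
    · have h1 : G.dist (x j) y = 1 := dist_eq_one_iff_adj.mpr hadj
      have h1' : G.dist y (x j) = 1 := by rw [dist_comm]; exact h1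
      have h2 : G.dist v y ≤ G.dist v (x j) + G.dist (x j) y := hG.dist_triangle
      have h3 : G.dist v (x j) ≤ G.dist v y + G.dist y (x j) := hG.dist_triangle
      rw [hx j hj] at h2 h3
      omega
  have hTcard : ∀ j, Finset.card (T j) = d + 1 := by
    intro j
    rw [hT]
    simp only []
    rw [Finset.card_insert_of_notMem (by simp), card_neighborFinset_eq_degree, hreg (x j)]
  have hsub : (G.neighborFinset v) ∪ (Finset.Icc 1 m).biUnion T ⊆ (G.power r).neighborFinset v := by
    intro y hy
    rw [Finset.mem_union] at hy
    rw [SimpleGraph.mem_neighborFinset]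
    rcases hy with hy | hy
    · rw [SimpleGraph.mem_neighborFinset] at hy
      exact ⟨hy.ne, by rw [dist_eq_one_iff_adj.mpr hy]; omega⟩
    · obtain ⟨j, hj, hyT⟩ := Finset.mem_biUnion.mp hy
      rw [Finset.mem_Icc] at hj
      obtain ⟨hd1, hd2⟩ := hTdist j hj.2 y hyT
      refine ⟨?_, by omega⟩
      rintro rfl
      rw [SimpleGraph.dist_self] at hd1 hd2
      have := hj.1
      omega
  have hdisj : ∀ i ∈ Finset.Icc 1 m, ∀ j ∈ Finset.Icc 1 m, i ≠ j → Disjoint (T i) (T j) := by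
    intro i hi j hj hij
    rw [Finset.disjoint_left]
    intro y hyi hyj
    obtain ⟨a1, a2⟩ := hTdist i (Finset.mem_Icc.mp hi).2 y hyi
    obtain ⟨b1, b2⟩ := hTdist j (Finset.mem_Icc.mp hj).2 y hyj
    rcases Finset.mem_Icc.mp hi with ⟨hi1, _⟩
    rcases Finset.mem_Icc.mp hj with ⟨hj1, _⟩
    omega
  have hdisj0 : Disjoint (G.neighborFinset v) ((Finset.Icc 1 m).biUnion T) := by
    rw [Finset.disjoint_left]
    intro y hy hy'
    obtain ⟨j, hj, hyT⟩ := Finset.mem_biUnion.mp hy'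
    rw [Finset.mem_Icc] at hj
    obtain ⟨a1, a2⟩ := hTdist j hj.2 y hyT
    rw [SimpleGraph.mem_neighborFinset] at hy
    have h1 : G.dist v y = 1 := dist_eq_one_iff_adj.mpr hy
    have := hj.1
    omega
  have hcard : ((G.neighborFinset v) ∪ (Finset.Icc 1 m).biUnion T).card = d + m * (d+1) := by
    rw [Finset.card_union_of_disjoint hdisj0, Finset.card_biUnion hdisj,
      card_neighborFinset_eq_degree, hreg v]
    simp [hTcard, Nat.card_Icc, mul_comm]
  calc (m+1)*d + m = d + m*(d+1) := by ring
    _ = _ := hcard.symm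
    _ ≤ (G.power r).degree v := by
      rw [← card_neighborFinset_eq_degree]
      exact Finset.card_le_card hsub

end SimpleGraph

/-- for a connected `d`-regular simple graph with `r ≥ 6`,
`r ≢ 0 (mod 3)` and `diam(G) ≥ r`, we have `e(G^r)/e(G) ≥ ⌈r/3⌉`. -/
theorem edge_growth_regular_ne_zero_mod_three {V : Type*} [Fintype V]
    (G : SimpleGraph V) [DecidableRel G.Adj] (hG : G.Connected)
    (d : ℕ) (hreg : G.IsRegularOfDegree d)
    (r : ℕ) (hr3 : r % 3 ≠ 0) (hr : 6 ≤ r)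
    (hdiam : ∃ u w : V, r ≤ G.dist u w) :
    (⌈(r : ℝ) / 3⌉ : ℝ) ≤ ((G.power r).edgeSet.ncard : ℝ) / (G.edgeSet.ncard : ℝ) := by
  classical
  obtain ⟨u, w, huw⟩ := hdiam
  set m := r / 3 with hm
  have hmr : 3*m+1 ≤ r := by omega
  have hm3 : r ≤ 3*m+2 := by omega
  letI : DecidableRel (G.power r).Adj := Classical.decRel _
  have hdeg : ∀ v : V, (m+1)*d ≤ (G.power r).degree v := by
    intro v
    by_cases hcase : ∃ z, 3*m+1 ≤ G.dist v z
    · obtain ⟨z, hz⟩ := hcase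
      exact le_trans (Nat.le_add_right _ _) (SimpleGraph.deg_bound hG hreg hmr hz)
    · push_neg at hcase
      have h1 : (m+1)*d + m ≤ (G.power r).degree u :=
        SimpleGraph.deg_bound hG hreg hmr (le_trans hmr huw)
      have h2 : (G.power r).degree u < Fintype.card V := (G.power r).degree_lt_card_verts u
      have h3 : Finset.univ.erase v ⊆ (G.power r).neighborFinset v := by
        intro y hy
        rw [Finset.mem_erase] at hy
        rw [SimpleGraph.mem_neighborFinset]
        exact ⟨Ne.symm hy.1, by have := hcase y; omega⟩
      have h4 : Fintype.card V - 1 ≤ (G.power r).degree v := by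
        rw [← SimpleGraph.card_neighborFinset_eq_degree]
        calc Fintype.card V - 1 = (Finset.univ.erase v).card := by
              rw [Finset.card_erase_of_mem (Finset.mem_univ v), Finset.card_univ]
          _ ≤ _ := Finset.card_le_card h3
      omega
  have hd1 : 1 ≤ d := by
    obtain ⟨x, hx⟩ := SimpleGraph.exists_dist_eq' hG (show 1 ≤ G.dist u w by omega)
    have hpos : 0 < G.degree u :=
      (G.degree_pos_iff_exists_adj u).mpr ⟨x, SimpleGraph.dist_eq_one_iff_adj.mp hx⟩
    have := hreg u
    omega
  have hs1 : ∑ v : V, G.degree v = 2 * G.edgeFinset.card :=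
    G.sum_degrees_eq_twice_card_edges
  have hs2 : ∑ v : V, (G.power r).degree v = 2 * (G.power r).edgeFinset.card :=
    (G.power r).sum_degrees_eq_twice_card_edges
  have hE : 2 * G.edgeFinset.card = Fintype.card V * d := by
    rw [← hs1]
    calc ∑ v : V, G.degree v = ∑ _v : V, d := Finset.sum_congr rfl (fun v _ => hreg v)
      _ = Fintype.card V * d := by rw [Finset.sum_const, smul_eq_mul, Finset.card_univ]
  have hEp : Fintype.card V * ((m+1)*d) ≤ 2 * (G.power r).edgeFinset.card := by
    rw [← hs2]
    calc Fintype.card V * ((m+1)*d) = ∑ _v : V, (m+1)*d := by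
          rw [Finset.sum_const, smul_eq_mul, Finset.card_univ]
      _ ≤ _ := Finset.sum_le_sum (fun v _ => hdeg v)
  have hkey : (m+1) * G.edgeFinset.card ≤ (G.power r).edgeFinset.card := by
    have h5 : 2*((m+1) * G.edgeFinset.card) ≤ 2*(G.power r).edgeFinset.card := by
      calc 2*((m+1)*G.edgeFinset.card) = (m+1)*(2*G.edgeFinset.card) := by ring
        _ = (m+1)*(Fintype.card V * d) := by rw [hE]
        _ = Fintype.card V * ((m+1)*d) := by ring
        _ ≤ _ := hEp
    omega
  have hEpos : 0 < G.edgeFinset.card := by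
    have hn : 0 < Fintype.card V := Fintype.card_pos_iff.mpr ⟨u⟩
    have := Nat.mul_pos hn hd1
    omega
  have hc1 : G.edgeSet.ncard = G.edgeFinset.card := by
    rw [Set.ncard_eq_toFinset_card', Set.toFinset_card]
    exact G.edgeFinset_card.symm
  have hc2 : (G.power r).edgeSet.ncard = (G.power r).edgeFinset.card := by
    rw [Set.ncard_eq_toFinset_card', Set.toFinset_card]
    exact (G.power r).edgeFinset_card.symm
  have hE0 : (0:ℝ) < (G.edgeSet.ncard : ℝ) := by
    rw [hc1]; exact_mod_cast hEpos
  rw [le_div_iff₀ hE0]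
  have hceil : (⌈(r:ℝ)/3⌉ : ℝ) ≤ ((m:ℝ)+1) := by
    have h6 : ⌈(r:ℝ)/3⌉ ≤ ((m:ℤ)+1) := by
      apply Int.ceil_le.mpr
      rw [div_le_iff₀ (by norm_num : (0:ℝ) < 3)]
      have h7 : (r:ℝ) ≤ 3*(m:ℝ)+3 := by exact_mod_cast (by omega : r ≤ 3*m+3)
      push_cast
      linarith
    exact_mod_cast h6
  calc (⌈(r:ℝ)/3⌉ : ℝ) * (G.edgeSet.ncard : ℝ) ≤ ((m:ℝ)+1) * (G.edgeSet.ncard : ℝ) := by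
        apply mul_le_mul_of_nonneg_right hceil (le_of_lt hE0)
    _ ≤ ((G.power r).edgeSet.ncard : ℝ) := by
        rw [hc1, hc2]
        exact_mod_cast hkey
end

section
/- Let G be a connected graph (with loops at every vertex, minimum degree δ counting loops), r ≥ 6, diam(G) ≥ r, and suppose every vertex of G is within distance r−1 of a vertex v. Then |N^r(v)| = |V(G)| ≥ ⌈r/3⌉·δ. -/
/-- The ball of radius `r` around `v` (the `r`-th neighbourhood `N^r(v)`). -/
def SimpleGraph.natDistBall {V : Type*} (G : SimpleGraph V) (r : ℕ) (v : V) : Set V :=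
  {u : V | G.dist v u ≤ r}

private lemma dist_getVert_le {V : Type*} {G : SimpleGraph V} (hG : G.Connected)
    {u w : V} (p : G.Walk u w) (i k : ℕ) (h : i + k ≤ p.length) :
    G.dist (p.getVert i) (p.getVert (i + k)) ≤ k := by
  induction k with
  | zero => simp
  | succ k ih =>
    have h1 : G.dist (p.getVert i) (p.getVert (i + k)) ≤ k := ih (by omega)
    have hadj : G.Adj (p.getVert (i + k)) (p.getVert (i + k + 1)) :=
      p.adj_getVert_succ (by omega)
    have h2 : G.dist (p.getVert (i + k)) (p.getVert (i + k + 1)) = 1 :=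
      (SimpleGraph.dist_eq_one_iff_adj).mpr hadj
    have h3 := hG.dist_triangle (u := p.getVert i)
      (v := p.getVert (i + k)) (w := p.getVert (i + k + 1))
    have : i + (k + 1) = i + k + 1 := by omega
    rw [this]
    omega

private lemma dist_getVert_ge {V : Type*} {G : SimpleGraph V} (hG : G.Connected)
    {u w : V} (p : G.Walk u w) (hp : p.length = G.dist u w)
    (i j : ℕ) (hij : i ≤ j) (hj : j ≤ p.length) :
    j - i ≤ G.dist (p.getVert i) (p.getVert j) := by
  have h1 : G.dist u (p.getVert i) ≤ i := by
    have := dist_getVert_le hG p 0 i (by omega)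
    simpa using this
  have h2 : G.dist (p.getVert j) w ≤ p.length - j := by
    have := dist_getVert_le hG p j (p.length - j) (by omega)
    rwa [Nat.add_sub_cancel' hj, p.getVert_length] at this
  have t1 := hG.dist_triangle (u := u) (v := p.getVert i) (w := w)
  have t2 := hG.dist_triangle (u := p.getVert i) (v := p.getVert j) (w := w)
  omega

/-- in a connected graph with a loop at every vertex (minimum degree
`δ = G.minDegree + 1` counting loops), if `r ≥ 6`, `diam(G) ≥ r` and every vertex is
within distance `r − 1` of `v`, then `N^r(v)` is the whole vertex set and
`|V(G)| ≥ ⌈r/3⌉·δ`. -/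
theorem edge_growth_everything_close {V : Type*} [Fintype V]
    (G : SimpleGraph V) [DecidableRel G.Adj] (hG : G.Connected)
    (r : ℕ) (hr : 6 ≤ r)
    (hdiam : ∃ u w : V, r ≤ G.dist u w)
    (v : V) (hv : ∀ u : V, G.dist v u ≤ r - 1) :
    G.natDistBall r v = Set.univ ∧
      (⌈(r : ℝ) / 3⌉ : ℝ) * (G.minDegree + 1) ≤ (Nat.card V : ℝ) := by
  constructor
  · ext u
    simp only [SimpleGraph.natDistBall, Set.mem_setOf_eq, Set.mem_univ, iff_true]
    exact le_trans (hv u) (by omega)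
  · classical
    obtain ⟨u, w, hd⟩ := hdiam
    obtain ⟨p, hp⟩ := hG.exists_walk_length_eq_dist u w
    set k := (r + 2) / 3 with hk
    have hk3 : r ≤ 3 * k := by omega
    have hrlen : r ≤ p.length := by omega
    -- the chosen vertices
    set x : ℕ → V := fun t => p.getVert (3 * t) with hx
    have hxle : ∀ t, t < k → 3 * t ≤ p.length := by intro t ht; omega
    have hdist : ∀ s t, s < t → t < k → 3 ≤ G.dist (x s) (x t) := by
      intro s t hst ht
      have := dist_getVert_ge hG p hp (3 * s) (3 * t) (by omega) (by omega)
      calc (3 : ℕ) ≤ 3 * t - 3 * s := by omega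
        _ ≤ G.dist (x s) (x t) := this
    -- closed neighbourhood finsets
    set S : ℕ → Finset V := fun t => insert (x t) (G.neighborFinset (x t)) with hS
    have hcard : ∀ t, G.minDegree + 1 ≤ (S t).card := by
      intro t
      have : (S t).card = G.degree (x t) + 1 := by
        rw [hS]
        rw [Finset.card_insert_of_notMem (by simp),
          SimpleGraph.card_neighborFinset_eq_degree]
      rw [this]
      have : G.minDegree ≤ G.degree (x t) := G.minDegree_le_degree (x t)
      omega
    have hmem_dist : ∀ t y, y ∈ S t → G.dist (x t) y ≤ 1 := by
      intro t y hy
      rw [hS] at hy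
      simp only [Finset.mem_insert, SimpleGraph.mem_neighborFinset] at hy
      rcases hy with rfl | hy
      · rw [SimpleGraph.dist_self]; omega
      · exact le_of_eq (SimpleGraph.dist_eq_one_iff_adj.mpr hy)
    have hdisj : ∀ s ∈ Finset.range k, ∀ t ∈ Finset.range k, s ≠ t →
        Disjoint (S s) (S t) := by
      intro s hs t ht hst
      rw [Finset.disjoint_left]
      intro y hys hyt
      wlog h : s < t generalizing s t
      · exact this t ht s hs hst.symm hyt hys (by omega)
      have h3 : 3 ≤ G.dist (x s) (x t) := hdist s t h (Finset.mem_range.mp ht)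
      have h1 : G.dist (x s) y ≤ 1 := hmem_dist s y hys
      have h2 : G.dist y (x t) ≤ 1 := by
        rw [SimpleGraph.dist_comm]; exact hmem_dist t y hyt
      have t1 := hG.dist_triangle (u := x s) (v := y) (w := x t)
      omega
    have hbiUnion : ((Finset.range k).biUnion S).card ≤ Fintype.card V :=
      Finset.card_le_card (Finset.subset_univ _)
    have hsum : k * (G.minDegree + 1) ≤ ((Finset.range k).biUnion S).card := by
      rw [Finset.card_biUnion hdisj]
      calc k * (G.minDegree + 1) = ∑ _t ∈ Finset.range k, (G.minDegree + 1) := by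
            simp [mul_comm]
        _ ≤ ∑ t ∈ Finset.range k, (S t).card :=
            Finset.sum_le_sum fun t _ => hcard t
    have hfinal : k * (G.minDegree + 1) ≤ Fintype.card V := le_trans hsum hbiUnion
    have hceil : (⌈(r : ℝ) / 3⌉ : ℝ) ≤ (k : ℝ) := by
      have h1 : ⌈(r : ℝ) / 3⌉ ≤ (k : ℤ) := by
        apply Int.ceil_le.mpr
        rw [div_le_iff₀ (by norm_num : (0:ℝ) < 3)]
        exact_mod_cast (by omega : r ≤ k * 3)
      exact_mod_cast h1
    rw [Nat.card_eq_fintype_card]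
    calc (⌈(r : ℝ) / 3⌉ : ℝ) * (G.minDegree + 1)
        ≤ (k : ℝ) * (G.minDegree + 1) := by
          apply mul_le_mul_of_nonneg_right hceil
          positivity
      _ ≤ (Fintype.card V : ℝ) := by exact_mod_cast hfinal
end
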